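/- Let p ≥ 3 be odd and l ≥ 1 an integer, and let Δ_{T(p,q)}(t) = (t^{pq} − 1)(t − 1)/((t^p − 1)(t^q − 1)) ∈ ℤ[t, t⁻¹]. Then the sum of the absolute values of the coefficients of Δ_{T(p,q)} equals ((p − 1)/2)·((p + 1)l + 2) + 1 when q = lp + 2, and equals ((p − 1)/2)·((p + 1)l − 2) − 1 when q = lp − 2. -/

import Mathlib

open LaurentPolynomial Finset
namespace St16


def EE (p : ℕ) (e μ : ℕ → ℕ) : Finset ℤ :=
  (range p).biUnion fun j => (range (μ j)).image fun k : ℕ => (e j : ℤ) + (p : ℤ) * (k : ℤ)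

lemma key_eq {p : ℕ} {e : ℕ → ℕ} (helt : ∀ j, j < p → e j < p)
    (hinj : ∀ j, j < p → ∀ j', j' < p → e j = e j' → j = j')
    {j j' : ℕ} (hj : j < p) (hj' : j' < p) {k k' : ℕ}
    (heq : (e j : ℤ) + (p:ℤ) * k = (e j' : ℤ) + (p:ℤ) * k') : j = j' ∧ k = k' := by
  have hej := helt j hj
  have hej' := helt j' hj'
  have hd : (e j : ℤ) - e j' = (p : ℤ) * ((k' : ℤ) - k) := by linarith
  have hk1 : (k' : ℤ) - k ≤ 0 := by
    by_contra hc; push_neg at hc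
    have h1 : (1 : ℤ) ≤ (k' : ℤ) - k := by omega
    nlinarith [mul_le_mul_of_nonneg_left h1 (by positivity : (0:ℤ) ≤ (p:ℤ))]
  have hk2 : (0:ℤ) ≤ (k' : ℤ) - k := by
    by_contra hc; push_neg at hc
    have h1 : (1 : ℤ) ≤ (k : ℤ) - k' := by omega
    nlinarith [mul_le_mul_of_nonneg_left h1 (by positivity : (0:ℤ) ≤ (p:ℤ))]
  have hz : (k' : ℤ) - k = 0 := by omega
  rw [hz, mul_zero] at hd
  have hee : e j = e j' := by omega
  exact ⟨hinj j hj j' hj' hee, by omega⟩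

lemma mem_EE {p : ℕ} {e μ : ℕ → ℕ}
    (helt : ∀ j, j < p → e j < p)
    (hinj : ∀ j, j < p → ∀ j', j' < p → e j = e j' → j = j')
    {j' : ℕ} (hj' : j' < p) (k' : ℕ) :
    ((e j' : ℤ) + (p:ℤ) * (k':ℤ)) ∈ EE p e μ ↔ k' < μ j' := by
  constructor
  · intro hmem
    simp only [EE, mem_biUnion, mem_image, mem_range] at hmem
    obtain ⟨j, hj, k, hk, heq⟩ := hmem
    obtain ⟨hjj, hkk⟩ := key_eq helt hinj hj hj' heq
    subst hjj; omega
  · intro hk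
    simp only [EE, mem_biUnion, mem_image, mem_range]
    exact ⟨j', hj', k', hk, rfl⟩

lemma EE_disj {p : ℕ} {e μ : ℕ → ℕ}
    (helt : ∀ j, j < p → e j < p)
    (hinj : ∀ j, j < p → ∀ j', j' < p → e j = e j' → j = j') :
    ∀ j ∈ range p, ∀ j' ∈ range p, j ≠ j' →
      Disjoint ((range (μ j)).image fun k : ℕ => (e j : ℤ) + (p:ℤ) * (k:ℤ))
        ((range (μ j')).image fun k : ℕ => (e j' : ℤ) + (p:ℤ) * (k:ℤ)) := by
  intro j hj j' hj' hne
  simp only [mem_range] at hj hj'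
  rw [Finset.disjoint_left]
  rintro a ha ha'
  simp only [mem_image, mem_range] at ha ha'
  obtain ⟨k, hk, rfl⟩ := ha
  obtain ⟨k', hk', heq⟩ := ha'
  exact hne (key_eq helt hinj hj hj' heq.symm).1

lemma EE_nonneg {p : ℕ} {e μ : ℕ → ℕ} {n : ℤ} (hn : n ∈ EE p e μ) : 0 ≤ n := by
  simp only [EE, mem_biUnion, mem_image, mem_range] at hn
  obtain ⟨j, _, k, _, rfl⟩ := hn
  positivity

lemma EE_zero {p : ℕ} {e μ : ℕ → ℕ}
    (hE0 : ∀ j, j < p → e j = 0 → μ j = 0) : (0:ℤ) ∉ EE p e μ := by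
  intro hn
  simp only [EE, mem_biUnion, mem_image, mem_range] at hn
  obtain ⟨j, hj, k, hk, h⟩ := hn
  have hnn : (0:ℤ) ≤ (p:ℤ) * (k:ℤ) := by positivity
  have h1 : e j = 0 := by omega
  have := hE0 j hj h1
  omega


lemma geom (a : ℤ) (n : ℕ) :
    (T a - 1) * ∑ k ∈ range n, (T (a * k) : LaurentPolynomial ℤ) = T (a * n) - 1 := by
  induction n with
  | zero => simp
  | succ n ih =>
      rw [sum_range_succ, mul_add, ih]
      have h : (T a - 1) * (T (a * n) : LaurentPolynomial ℤ) = T (a * (n+1)) - T (a * n) := by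
        rw [sub_mul, one_mul, ← T_add]
        ring_nf
      push_cast at h ⊢
      rw [h]
      ring

noncomputable def Gp (p : ℕ) (e μ : ℕ → ℕ) : LaurentPolynomial ℤ :=
  ∑ j ∈ range p, ∑ k ∈ range (μ j), T ((e j : ℤ) + (p:ℤ) * (k:ℤ))

noncomputable def Δ₀ (p : ℕ) (e μ : ℕ → ℕ) : LaurentPolynomial ℤ :=
  1 + (T 1 - 1) * Gp p e μ

lemma delta_identity (p q : ℕ) (e μ : ℕ → ℕ)
    (helt : ∀ j, j < p → e j < p)
    (hinj : ∀ j, j < p → ∀ j', j' < p → e j = e j' → j = j')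
    (hq : ∀ j, j < p → e j + p * μ j = j * q) :
    (T (p:ℤ) - 1) * (T (q:ℤ) - 1) * Δ₀ p e μ = (T ((p:ℤ)*(q:ℤ)) - 1) * (T 1 - 1) := by
  set S : LaurentPolynomial ℤ := ∑ i ∈ range p, T (i:ℤ) with hS
  have h1 : (T 1 - 1) * S = T (p:ℤ) - 1 := by
    have := geom 1 p
    simpa using this
  have h2 : (T (p:ℤ) - 1) * Gp p e μ
      = (∑ j ∈ range p, T ((j:ℤ)*(q:ℤ))) - ∑ j ∈ range p, (T ((e j : ℤ)) : LaurentPolynomial ℤ) := by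
    rw [Gp, mul_sum, ← sum_sub_distrib]
    refine sum_congr rfl fun j hj => ?_
    rw [mem_range] at hj
    have hrw : ∀ k ∈ range (μ j), T ((e j : ℤ) + (p:ℤ)*(k:ℤ)) = (T (e j : ℤ) : LaurentPolynomial ℤ) * T ((p:ℤ)*(k:ℤ)) := by
      intro k _; rw [← T_add]
    rw [sum_congr rfl hrw, ← mul_sum, mul_left_comm, geom (p:ℤ) (μ j), mul_sub, mul_one, ← T_add]
    have : (e j : ℤ) + (p:ℤ) * (μ j : ℤ) = (j:ℤ) * (q:ℤ) := by
      exact_mod_cast congrArg (Nat.cast : ℕ → ℤ) (hq j hj)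
    rw [this]
  have himg : (range p).image e = range p := by
    apply Finset.eq_of_subset_of_card_le
    · intro x hx
      simp only [mem_image, mem_range] at hx ⊢
      obtain ⟨j, hj, rfl⟩ := hx
      exact helt j hj
    · rw [Finset.card_image_of_injOn, card_range]
      intro a ha b hb hab
      rw [mem_coe, mem_range] at ha hb
      exact hinj a ha b hb hab
  have h3 : ∑ j ∈ range p, (T ((e j : ℤ)) : LaurentPolynomial ℤ) = S := by
    have hs : ∑ x ∈ (range p).image e, (T (x:ℤ) : LaurentPolynomial ℤ)
        = ∑ x ∈ range p, (T ((e x : ℕ) : ℤ) : LaurentPolynomial ℤ) :=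
      Finset.sum_image (fun a ha b hb hab => hinj a (mem_range.1 ha) b (mem_range.1 hb) hab)
    rw [himg] at hs
    exact hs.symm
  have h4 : S * Δ₀ p e μ = ∑ j ∈ range p, (T ((j:ℤ)*(q:ℤ)) : LaurentPolynomial ℤ) := by
    have : S * Δ₀ p e μ = S + ((T 1 - 1) * S) * Gp p e μ := by rw [Δ₀]; ring
    rw [this, h1, h2, h3]; ring
  have h5 : (T (q:ℤ) - 1) * ∑ j ∈ range p, (T ((j:ℤ)*(q:ℤ)) : LaurentPolynomial ℤ)
      = T ((p:ℤ)*(q:ℤ)) - 1 := by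
    have := geom (q:ℤ) p
    have hc : ∀ j ∈ range p, (T ((q:ℤ)*(j:ℤ)) : LaurentPolynomial ℤ) = T ((j:ℤ)*(q:ℤ)) := by
      intro j _; rw [mul_comm]
    rw [sum_congr rfl hc, mul_comm (q:ℤ) (p:ℤ)] at this
    exact this
  calc (T (p:ℤ) - 1) * (T (q:ℤ) - 1) * Δ₀ p e μ
      = (T 1 - 1) * ((T (q:ℤ) - 1) * (S * Δ₀ p e μ)) := by rw [← h1]; ring
    _ = (T 1 - 1) * (T ((p:ℤ)*(q:ℤ)) - 1) := by rw [h4, h5]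
    _ = (T ((p:ℤ)*(q:ℤ)) - 1) * (T 1 - 1) := by ring

lemma Tsub_ne (n : ℤ) (h : n ≠ 0) : (T n : LaurentPolynomial ℤ) - 1 ≠ 0 := by
  intro hh
  have h1 : (T n : LaurentPolynomial ℤ) = T 0 := by rw [T_zero]; linear_combination hh
  have h2 : Finsupp.single n (1:ℤ) = Finsupp.single 0 1 := congrArg AddMonoidAlgebra.coeff h1
  exact h (Finsupp.single_left_injective (α := ℤ) (one_ne_zero (α := ℤ)) h2)

lemma delta_unique (p q : ℕ) (e μ : ℕ → ℕ) (hp : 0 < p) (hq0 : 0 < q)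
    (helt : ∀ j, j < p → e j < p)
    (hinj : ∀ j, j < p → ∀ j', j' < p → e j = e j' → j = j')
    (hq : ∀ j, j < p → e j + p * μ j = j * q)
    (Δ : LaurentPolynomial ℤ)
    (hΔ : (T (p:ℤ) - 1) * (T (q:ℤ) - 1) * Δ = (T ((p:ℤ)*(q:ℤ)) - 1) * (T 1 - 1)) :
    Δ = Δ₀ p e μ := by
  have h2 := delta_identity p q e μ helt hinj hq
  have hne : (T (p:ℤ) - 1) * ((T (q:ℤ) : LaurentPolynomial ℤ) - 1) ≠ 0 :=
    mul_ne_zero (Tsub_ne _ (by exact_mod_cast hp.ne')) (Tsub_ne _ (by exact_mod_cast hq0.ne'))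
  apply mul_left_cancel₀ hne
  rw [mul_assoc] at hΔ h2
  rw [mul_assoc, hΔ, mul_assoc, h2]



noncomputable def caster : LaurentPolynomial ℤ →+ (ℤ →₀ ℤ) := AddMonoidHom.mk' (fun x => AddMonoidAlgebra.coeff x) (fun _ _ => rfl)

lemma sum_indicator (p : ℕ) (e μ : ℕ → ℕ)
    (hdisj : ∀ j ∈ range p, ∀ j' ∈ range p, j ≠ j' →
      Disjoint ((range (μ j)).image fun k : ℕ => (e j : ℤ) + (p:ℤ) * (k:ℤ))
        ((range (μ j')).image fun k : ℕ => (e j' : ℤ) + (p:ℤ) * (k:ℤ)))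
    (hp : 0 < p) (n : ℤ) :
    ∑ j ∈ range p, ∑ k ∈ range (μ j), (if (e j : ℤ) + (p:ℤ)*(k:ℤ) = n then (1:ℤ) else 0)
      = if n ∈ EE p e μ then 1 else 0 := by
  have hinjk : ∀ j : ℕ, ∀ a ∈ range (μ j), ∀ b ∈ range (μ j),
      (e j : ℤ) + (p:ℤ)*(a:ℤ) = (e j : ℤ) + (p:ℤ)*(b:ℤ) → a = b := by
    intro j a _ b _ hab
    have hp' : (p:ℤ) ≠ 0 := by exact_mod_cast hp.ne'
    have : (a : ℤ) = b := mul_left_cancel₀ hp' (by linarith)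
    exact_mod_cast this
  rw [← Finset.sum_ite_eq' (EE p e μ) n (fun _ => (1:ℤ))]
  rw [EE, Finset.sum_biUnion hdisj]
  refine Finset.sum_congr rfl fun j hj => ?_
  rw [Finset.sum_image (hinjk j)]

lemma coeff_formula (p : ℕ) (e μ : ℕ → ℕ) (hp : 0 < p)
    (hdisj : ∀ j ∈ range p, ∀ j' ∈ range p, j ≠ j' →
      Disjoint ((range (μ j)).image fun k : ℕ => (e j : ℤ) + (p:ℤ) * (k:ℤ))
        ((range (μ j')).image fun k : ℕ => (e j' : ℤ) + (p:ℤ) * (k:ℤ)))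
    (n : ℤ) :
    caster (Δ₀ p e μ) n =
      (if n = 0 then 1 else 0) + (if n - 1 ∈ EE p e μ then 1 else 0)
        - (if n ∈ EE p e μ then 1 else 0) := by
  have hexp : Δ₀ p e μ = 1 + ∑ j ∈ range p, ∑ k ∈ range (μ j),
      (T ((e j : ℤ) + (p:ℤ)*(k:ℤ) + 1) - T ((e j : ℤ) + (p:ℤ)*(k:ℤ))) := by
    rw [Δ₀, Gp, mul_sum]
    congr 1
    refine Finset.sum_congr rfl fun j _ => ?_
    rw [mul_sum]
    refine Finset.sum_congr rfl fun k _ => ?_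
    rw [sub_mul, one_mul, ← T_add]
    ring_nf
  rw [hexp]
  rw [map_add, map_sum, Finsupp.add_apply]
  have h1 : caster 1 n = if n = 0 then 1 else 0 := by
    show (Finsupp.single (0:ℤ) (1:ℤ)) n = _
    rw [Finsupp.single_apply]
    simp [eq_comm]
  rw [h1]
  have h2 : ∀ j ∈ range p, (caster (∑ k ∈ range (μ j),
      (T ((e j : ℤ) + (p:ℤ)*(k:ℤ) + 1) - T ((e j : ℤ) + (p:ℤ)*(k:ℤ))))) n
      = ∑ k ∈ range (μ j),
        ((if (e j : ℤ) + (p:ℤ)*(k:ℤ) + 1 = n then (1:ℤ) else 0)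
          - (if (e j : ℤ) + (p:ℤ)*(k:ℤ) = n then (1:ℤ) else 0)) := by
    intro j _
    rw [map_sum, Finsupp.finset_sum_apply]
    refine Finset.sum_congr rfl fun k _ => ?_
    rw [map_sub, Finsupp.sub_apply]
    congr 1 <;>
    · show (Finsupp.single _ (1:ℤ)) n = _
      rw [Finsupp.single_apply]
  rw [Finsupp.finset_sum_apply, Finset.sum_congr rfl h2]
  have h3 : ∑ j ∈ range p, ∑ k ∈ range (μ j),
        ((if (e j : ℤ) + (p:ℤ)*(k:ℤ) + 1 = n then (1:ℤ) else 0)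
          - (if (e j : ℤ) + (p:ℤ)*(k:ℤ) = n then (1:ℤ) else 0))
      = (if n - 1 ∈ EE p e μ then 1 else 0) - (if n ∈ EE p e μ then 1 else 0) := by
    rw [← sum_indicator p e μ hdisj hp n, ← sum_indicator p e μ hdisj hp (n-1)]
    rw [← Finset.sum_sub_distrib]
    refine Finset.sum_congr rfl fun j _ => ?_
    rw [← Finset.sum_sub_distrib]
    refine Finset.sum_congr rfl fun k _ => ?_
    congr 1
    refine if_congr ?_ rfl rfl
    omega
  rw [h3]
  ring



lemma master (p q : ℕ) (e μ : ℕ → ℕ) (hp : 0 < p) (hq0 : 0 < q)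
    (helt : ∀ j, j < p → e j < p)
    (hinj : ∀ j, j < p → ∀ j', j' < p → e j = e j' → j = j')
    (hq : ∀ j, j < p → e j + p * μ j = j * q)
    (hE0 : ∀ j, j < p → e j = 0 → μ j = 0)
    (Δ : LaurentPolynomial ℤ)
    (hΔ : (T (p:ℤ) - 1) * (T (q:ℤ) - 1) * Δ = (T ((p:ℤ)*(q:ℤ)) - 1) * (T 1 - 1)) :
    ∑ n ∈ (AddMonoidAlgebra.coeff Δ : ℤ →₀ ℤ).support, |(AddMonoidAlgebra.coeff Δ : ℤ →₀ ℤ) n| =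
      1 + (∑ j ∈ range p, ((range (μ j)).filter
            (fun k : ℕ => ((e j : ℤ) + (p:ℤ) * (k:ℤ) - 1) ∉ EE p e μ)).card : ℕ)
        + (∑ j ∈ range p, ((range (μ j)).filter
            (fun k : ℕ => ((e j : ℤ) + (p:ℤ) * (k:ℤ) + 1) ∉ EE p e μ)).card : ℕ) := by
  classical
  have hdisj := EE_disj (μ := μ) helt hinj
  have hΔ₀ := delta_unique p q e μ hp hq0 helt hinj hq Δ hΔ
  subst hΔ₀
  have hf := coeff_formula p e μ hp hdisj
  set N : ℤ := (p:ℤ)*(q:ℤ) + (p:ℤ) + 1 with hN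
  have hNn : (0:ℤ) ≤ N := by positivity
  have hEb : ∀ m ∈ EE p e μ, 0 ≤ m ∧ m + 1 ≤ N := by
    intro m hm
    simp only [EE, mem_biUnion, mem_image, mem_range] at hm
    obtain ⟨j, hj, k, hk, rfl⟩ := hm
    refine ⟨by positivity, ?_⟩
    have h2 : p * μ j ≤ j * q := by
      have := hq j hj; omega
    have h3 : p * k + p ≤ p * μ j := by
      have h := Nat.mul_le_mul_left p (Nat.succ_le_of_lt hk)
      rw [Nat.mul_succ] at h
      exact h
    have h4 : j * q ≤ p * q := Nat.mul_le_mul_right q (le_of_lt hj)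
    have h5 := helt j hj
    have h1 : e j + p * k + 1 ≤ p * q + p + 1 := by omega
    rw [hN]
    exact_mod_cast h1
  have hcast : (AddMonoidAlgebra.coeff (Δ₀ p e μ : LaurentPolynomial ℤ) : ℤ →₀ ℤ) = caster (Δ₀ p e μ) := rfl
  rw [hcast]
  have h0E : (0:ℤ) ∉ EE p e μ := EE_zero hE0
  have hm1E : (-1:ℤ) ∉ EE p e μ := fun h => by have := EE_nonneg h; omega
  have hsub : (caster (Δ₀ p e μ)).support ⊆ Finset.Icc 0 N := by
    intro n hn
    rw [Finsupp.mem_support_iff, hf n] at hn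
    by_contra hnF
    have c1 : ¬ n = 0 := by
      rintro rfl; exact hnF (Finset.mem_Icc.2 ⟨le_refl 0, hNn⟩)
    have c2 : n - 1 ∉ EE p e μ := by
      intro h
      obtain ⟨ha, hb⟩ := hEb _ h
      exact hnF (Finset.mem_Icc.2 ⟨by omega, by omega⟩)
    have c3 : n ∉ EE p e μ := by
      intro h
      obtain ⟨ha, hb⟩ := hEb _ h
      exact hnF (Finset.mem_Icc.2 ⟨ha, by omega⟩)
    simp [c1, c2, c3] at hn
  rw [Finset.sum_subset hsub
    (fun x _ hx => by rw [Finsupp.notMem_support_iff.1 hx, abs_zero])]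
  have habs : ∀ n : ℤ, |caster (Δ₀ p e μ) n| =
      (if n = 0 then 1 else 0)
        + (if n - 1 ∈ EE p e μ ∧ n ∉ EE p e μ then 1 else 0)
        + (if n ∈ EE p e μ ∧ n - 1 ∉ EE p e μ then 1 else 0) := by
    intro n
    rw [hf n]
    by_cases hn : n = 0
    · subst hn; norm_num [h0E, hm1E]
    · by_cases h1 : n - 1 ∈ EE p e μ <;> by_cases h2 : n ∈ EE p e μ <;>
        simp [hn, h1, h2]
  rw [Finset.sum_congr rfl (fun n _ => habs n)]
  rw [Finset.sum_add_distrib, Finset.sum_add_distrib]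
  have G1 : ∑ n ∈ Finset.Icc (0:ℤ) N, (if n = 0 then (1:ℤ) else 0) = 1 := by
    rw [Finset.sum_ite_eq' (Finset.Icc (0:ℤ) N) (0:ℤ) (fun _ => (1:ℤ))]
    simp [hNn]
  have cardA : (Finset.Icc (0:ℤ) N).filter (fun n => n ∈ EE p e μ ∧ n - 1 ∉ EE p e μ)
      = (EE p e μ).filter (fun n => n - 1 ∉ EE p e μ) := by
    ext n
    simp only [Finset.mem_filter, Finset.mem_Icc]
    constructor
    · rintro ⟨-, h⟩; exact h
    · rintro ⟨h1, h2⟩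
      obtain ⟨ha, hb⟩ := hEb _ h1
      exact ⟨⟨ha, by omega⟩, h1, h2⟩
  have cardB : (Finset.Icc (0:ℤ) N).filter (fun n => n - 1 ∈ EE p e μ ∧ n ∉ EE p e μ)
      = ((EE p e μ).filter (fun m => m + 1 ∉ EE p e μ)).image (fun m => m + 1) := by
    ext n
    simp only [Finset.mem_filter, Finset.mem_Icc, Finset.mem_image]
    constructor
    · rintro ⟨hFn, h1, h2⟩
      refine ⟨n - 1, ⟨h1, ?_⟩, by ring⟩
      rwa [sub_add_cancel]
    · rintro ⟨m, ⟨hm, hm1⟩, rfl⟩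
      obtain ⟨ha, hb⟩ := hEb _ hm
      refine ⟨⟨by omega, hb⟩, by simpa using hm, by simpa using hm1⟩
  have cardE : ∀ P : ℤ → Prop, ∀ _ : DecidablePred P,
      ((EE p e μ).filter P).card
        = ∑ j ∈ range p, ((range (μ j)).filter (fun k : ℕ => P ((e j : ℤ) + (p:ℤ)*(k:ℤ)))).card := by
    intro P hP
    rw [EE, Finset.filter_biUnion, Finset.card_biUnion
      (fun j hj j' hj' hne => Finset.disjoint_filter_filter (hdisj j hj j' hj' hne))]
    refine Finset.sum_congr rfl fun j hj => ?_
    rw [Finset.filter_image, Finset.card_image_of_injOn]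
    intro a ha b hb hab
    have hab' : (e j : ℤ) + (p:ℤ)*(a:ℤ) = (e j : ℤ) + (p:ℤ)*(b:ℤ) := hab
    have hp' : (p:ℤ) ≠ 0 := by exact_mod_cast hp.ne'
    have : (a : ℤ) = b := mul_left_cancel₀ hp' (by linarith)
    exact_mod_cast this
  have G3 : ∑ n ∈ Finset.Icc (0:ℤ) N, (if n ∈ EE p e μ ∧ n - 1 ∉ EE p e μ then (1:ℤ) else 0)
      = (∑ j ∈ range p, ((range (μ j)).filter
            (fun k : ℕ => ((e j : ℤ) + (p:ℤ) * (k:ℤ) - 1) ∉ EE p e μ)).card : ℕ) := by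
    rw [Finset.sum_boole, cardA, cardE _ _]
  have G2 : ∑ n ∈ Finset.Icc (0:ℤ) N, (if n - 1 ∈ EE p e μ ∧ n ∉ EE p e μ then (1:ℤ) else 0)
      = (∑ j ∈ range p, ((range (μ j)).filter
            (fun k : ℕ => ((e j : ℤ) + (p:ℤ) * (k:ℤ) + 1) ∉ EE p e μ)).card : ℕ) := by
    rw [Finset.sum_boole, cardB, Finset.card_image_of_injective _ (add_left_injective 1),
      cardE _ _]
  rw [G1, G2, G3]
  push_cast
  ring


lemma filter_ge_card (n c : ℕ) : ((range n).filter (fun k => c ≤ k)).card = n - c := by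
  have h : (range n).filter (fun k => c ≤ k) = Finset.Ico c n := by
    ext x
    simp only [Finset.mem_filter, Finset.mem_range, Finset.mem_Ico]
    omega
  rw [h, Nat.card_Ico]

def ep (p : ℕ) (j : ℕ) : ℕ := if 2*j < p then 2*j else 2*j - p
def μp (p l : ℕ) (j : ℕ) : ℕ := if 2*j < p then l*j else l*j + 1

lemma plus_case (p l m : ℕ) (hpm : p = 2*m+1) (hm : 1 ≤ m) (hl : 1 ≤ l)
    (Δ : LaurentPolynomial ℤ)
    (hΔ : (T (p : ℤ) - 1) * (T ((l : ℤ) * p + 2) - 1) * Δ =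
          (T ((p : ℤ) * ((l : ℤ) * p + 2)) - 1) * (T 1 - 1)) :
    ∑ j ∈ (AddMonoidAlgebra.coeff Δ : ℤ →₀ ℤ).support, |(AddMonoidAlgebra.coeff Δ : ℤ →₀ ℤ) j| =
      ((p : ℤ) - 1) / 2 * (((p : ℤ) + 1) * l + 2) + 1 := by
  classical
  set q : ℕ := l * p + 2 with hqdef
  have hqz : ((q : ℕ) : ℤ) = (l : ℤ) * p + 2 := by rw [hqdef]; push_cast; ring
  have hp : 0 < p := by omega
  have hq0 : 0 < q := by omega
  set e : ℕ → ℕ := ep p with hedef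
  set μ : ℕ → ℕ := μp p l with hμdef
  have helt : ∀ j, j < p → e j < p := by
    intro j hj; simp only [hedef, ep]; split_ifs <;> omega
  have hinj : ∀ j, j < p → ∀ j', j' < p → e j = e j' → j = j' := by
    intro j hj j' hj' h; simp only [hedef, ep] at h; split_ifs at h <;> omega
  have hq : ∀ j, j < p → e j + p * μ j = j * q := by
    intro j hj
    simp only [hedef, hμdef, ep, μp, hqdef]
    split_ifs with h
    · ring
    · have h2 : p ≤ 2*j := by omega
      zify [h2]; ring
  have hE0 : ∀ j, j < p → e j = 0 → μ j = 0 := by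
    intro j hj h
    simp only [hedef, ep] at h
    simp only [hμdef, μp]
    split_ifs at h ⊢ with h1
    · have hj0 : j = 0 := by omega
      subst hj0; simp
    · omega
  have hΔ' : (T (p:ℤ) - 1) * (T ((q:ℕ):ℤ) - 1) * Δ = (T ((p:ℤ)*((q:ℕ):ℤ)) - 1) * (T 1 - 1) := by
    rw [hqz]; exact hΔ
  have hmaster := master p q e μ hp hq0 helt hinj hq hE0 Δ hΔ'
  rw [hmaster]
  -- count A
  have hA : ∀ j ∈ range p, ((range (μ j)).filter
      (fun k : ℕ => ((e j : ℤ) + (p:ℤ) * (k:ℤ) - 1) ∉ EE p e μ)).card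
      = if 2*j < p then 0 else l*(m+1) + 1 := by
    intro j hjr
    rw [mem_range] at hjr
    by_cases hcase : 2*j < p
    · rw [if_pos hcase]
      by_cases hj0 : j = 0
      · subst hj0
        have h0 : μ 0 = 0 := by
          simp only [hμdef, μp]
          rw [if_pos (by omega : 2*0 < p)]
          exact Nat.mul_zero l
        rw [h0]
        simp
      · rw [Finset.card_eq_zero, Finset.filter_eq_empty_iff]
        intro k hk
        rw [mem_range] at hk
        rw [not_not]
        have hj' : j + m < p := by omega
        have hej' : e (j + m) = 2*j - 1 := by
          simp only [hedef, ep]; split_ifs <;> omega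
        have hej : e j = 2*j := by simp [hedef, ep, hcase]
        have hxy : (e j : ℤ) - 1 = (e (j+m) : ℤ) := by rw [hej, hej']; omega
        have hrw : (e j : ℤ) + (p:ℤ)*(k:ℤ) - 1 = (e (j+m) : ℤ) + (p:ℤ)*(k:ℤ) := by
          linarith
        rw [hrw, mem_EE helt hinj hj' k]
        have hμ' : μ (j+m) = l*(j+m) + 1 := by
          simp only [hμdef, μp]; rw [if_neg (by omega)]
        have hμj : μ j = l*j := by simp [hμdef, μp, hcase]
        rw [hμ']
        have : l*j ≤ l*(j+m) := Nat.mul_le_mul_left l (by omega)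
        omega
    · rw [if_neg hcase]
      have hj'lt : j - (m+1) < p := by omega
      have hej : e j = 2*j - p := by simp [hedef, ep, hcase]
      have hej' : e (j - (m+1)) = 2*j - p - 1 := by
        simp only [hedef, ep]
        rw [if_pos (by omega)]
        omega
      have hμ' : μ (j - (m+1)) = l * (j - (m+1)) := by
        simp only [hμdef, μp]; rw [if_pos (by omega)]
      have hμj : μ j = l*j + 1 := by simp only [hμdef, μp]; rw [if_neg hcase]
      have hfc : ∀ k ∈ range (μ j),
          ((( e j : ℤ) + (p:ℤ)*(k:ℤ) - 1) ∉ EE p e μ) ↔ (l * (j - (m+1)) ≤ k) := by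
        intro k hk
        have hxy : (e j : ℤ) - 1 = (e (j - (m+1)) : ℤ) := by rw [hej, hej']; omega
        have hrw : (e j : ℤ) + (p:ℤ)*(k:ℤ) - 1 = (e (j-(m+1)) : ℤ) + (p:ℤ)*(k:ℤ) := by
          linarith
        rw [hrw, mem_EE helt hinj hj'lt k, hμ', not_lt]
      rw [Finset.filter_congr hfc, filter_ge_card, hμj]
      have hjj : j = (j - (m+1)) + (m+1) := by omega
      have : l*j = l*(j-(m+1)) + l*(m+1) := by
        conv_lhs => rw [hjj]
        rw [Nat.mul_add]
      omega
  -- count B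
  have hB : ∀ j ∈ range p, ((range (μ j)).filter
      (fun k : ℕ => ((e j : ℤ) + (p:ℤ) * (k:ℤ) + 1) ∉ EE p e μ)).card
      = (if 2*j < p then 0 else l*m + 1) + (if j = m then l*m else 0) := by
    intro j hjr
    rw [mem_range] at hjr
    by_cases hj0 : j = m
    · rw [if_pos (by omega), if_pos hj0]
      have hμj : μ j = l*m := by
        simp only [hμdef, μp]
        rw [if_pos (by omega), hj0]
      have he0 : e 0 = 0 := by
        simp only [hedef, ep]
        rw [if_pos (by omega : 2*0 < p)]
      have hejm : e j = 2*m := by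
        simp only [hedef, ep]
        rw [if_pos (by omega)]
        omega
      have hp0 : 0 < p := hp
      have hpz : (p:ℤ) = 2*(m:ℤ)+1 := by exact_mod_cast congrArg (Nat.cast : ℕ → ℤ) hpm
      have hfc : ∀ k ∈ range (μ j),
          ((( e j : ℤ) + (p:ℤ)*(k:ℤ) + 1) ∉ EE p e μ) ↔ True := by
        intro k hk
        have hrw : (e j : ℤ) + (p:ℤ)*(k:ℤ) + 1 = (e 0 : ℤ) + (p:ℤ)*((k+1 : ℕ):ℤ) := by
          rw [he0, hejm]
          push_cast
          have hx : (p:ℤ)*((k:ℤ)+1) = (p:ℤ)*(k:ℤ) + p := by ring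
          linarith [hx, hpz]
        rw [hrw, mem_EE helt hinj hp0 (k+1)]
        have hμ0 : μ 0 = 0 := by
          simp only [hμdef, μp]
          rw [if_pos (by omega : 2*0 < p)]
          exact Nat.mul_zero l
        simp [hμ0]
      rw [Finset.filter_congr hfc]
      simp [hμj]
    · by_cases hcase : 2*j < p
      · rw [if_pos hcase, if_neg hj0]
        rw [Finset.card_eq_zero, Finset.filter_eq_empty_iff]
        intro k hk
        rw [mem_range] at hk
        rw [not_not]
        have hj' : j + (m+1) < p := by omega
        have hej' : e (j + (m+1)) = 2*j + 1 := by
          simp only [hedef, ep]; split_ifs <;> omega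
        have hej : e j = 2*j := by simp [hedef, ep, hcase]
        have hxy : (e j : ℤ) + 1 = (e (j+(m+1)) : ℤ) := by rw [hej, hej']; push_cast; ring
        have hrw : (e j : ℤ) + (p:ℤ)*(k:ℤ) + 1 = (e (j+(m+1)) : ℤ) + (p:ℤ)*(k:ℤ) := by
          linarith
        rw [hrw, mem_EE helt hinj hj' k]
        have hμ' : μ (j+(m+1)) = l*(j+(m+1)) + 1 := by
          simp only [hμdef, μp]; rw [if_neg (by omega)]
        have hμj : μ j = l*j := by simp [hμdef, μp, hcase]
        rw [hμ']
        have : l*j ≤ l*(j+(m+1)) := Nat.mul_le_mul_left l (by omega)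
        omega
      · rw [if_neg hcase, if_neg hj0]
        have hj'lt : j - m < p := by omega
        have hej : e j = 2*j - p := by simp [hedef, ep, hcase]
        have hej' : e (j - m) = 2*j - p + 1 := by
          simp only [hedef, ep]
          rw [if_pos (by omega)]
          omega
        have hμ' : μ (j - m) = l * (j - m) := by
          simp only [hμdef, μp]; rw [if_pos (by omega)]
        have hμj : μ j = l*j + 1 := by simp only [hμdef, μp]; rw [if_neg hcase]
        have hfc : ∀ k ∈ range (μ j),
            ((( e j : ℤ) + (p:ℤ)*(k:ℤ) + 1) ∉ EE p e μ) ↔ (l * (j - m) ≤ k) := by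
          intro k hk
          have hxy : (e j : ℤ) + 1 = (e (j - m) : ℤ) := by rw [hej, hej']; omega
          have hrw : (e j : ℤ) + (p:ℤ)*(k:ℤ) + 1 = (e (j-m) : ℤ) + (p:ℤ)*(k:ℤ) := by
            linarith
          rw [hrw, mem_EE helt hinj hj'lt k, hμ', not_lt]
        rw [Finset.filter_congr hfc, filter_ge_card, hμj]
        have hjj : j = (j - m) + m := by omega
        have : l*j = l*(j-m) + l*m := by
          conv_lhs => rw [hjj]
          rw [Nat.mul_add]
        omega
  rw [Finset.sum_congr rfl hA, Finset.sum_congr rfl hB]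
  -- evaluate the sums
  have hcard : ((range p).filter (fun j => ¬ (2*j < p))).card = m := by
    have h : (range p).filter (fun j => ¬ (2*j < p)) = Finset.Ico (m+1) p := by
      ext x
      simp only [Finset.mem_filter, Finset.mem_range, Finset.mem_Ico]
      omega
    rw [h, Nat.card_Ico]
    omega
  have hcard' : ((range p).filter (fun j => p ≤ 2*j)).card = m := by
    have h : (range p).filter (fun j => p ≤ 2*j) = Finset.Ico (m+1) p := by
      ext x
      simp only [Finset.mem_filter, Finset.mem_range, Finset.mem_Ico]
      omega
    rw [h, Nat.card_Ico]
    omega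
  have hSA : ∑ j ∈ range p, (if 2*j < p then 0 else l*(m+1) + 1) = m * (l*(m+1)+1) := by
    rw [Finset.sum_ite, Finset.sum_const, Finset.sum_const]
    simp [hcard, hcard']
  have hSB : ∑ j ∈ range p, ((if 2*j < p then 0 else l*m + 1) + (if j = m then l*m else 0))
      = m * (l*m+1) + l*m := by
    rw [Finset.sum_add_distrib]
    congr 1
    · rw [Finset.sum_ite, Finset.sum_const, Finset.sum_const]
      simp [hcard, hcard']
    · rw [Finset.sum_ite_eq' (range p) m (fun _ => l*m)]
      rw [if_pos (by rw [mem_range]; omega)]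
  rw [hSA, hSB]
  have hpz : (p:ℤ) = 2*(m:ℤ)+1 := by exact_mod_cast congrArg (Nat.cast : ℕ → ℤ) hpm
  have hdiv : ((p:ℤ) - 1)/2 = (m:ℤ) := by omega
  rw [hdiv, hpz]
  push_cast
  ring


def em (p : ℕ) (j : ℕ) : ℕ := if j = 0 then 0 else if 2*j < p then p - 2*j else 2*p - 2*j
def μm (p l : ℕ) (j : ℕ) : ℕ := if j = 0 then 0 else if 2*j < p then l*j - 1 else l*j - 2

lemma minus_case (p l m : ℕ) (hpm : p = 2*m+1) (hm : 1 ≤ m) (hl : 1 ≤ l)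
    (Δ : LaurentPolynomial ℤ)
    (hΔ : (T (p : ℤ) - 1) * (T ((l : ℤ) * p - 2) - 1) * Δ =
          (T ((p : ℤ) * ((l : ℤ) * p - 2)) - 1) * (T 1 - 1)) :
    ∑ j ∈ (AddMonoidAlgebra.coeff Δ : ℤ →₀ ℤ).support, |(AddMonoidAlgebra.coeff Δ : ℤ →₀ ℤ) j| =
      ((p : ℤ) - 1) / 2 * (((p : ℤ) + 1) * l - 2) - 1 := by
  classical
  have hplp : p ≤ l * p := Nat.le_mul_of_pos_left p hl
  have h2lp : 2 ≤ l * p := by omega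
  set q : ℕ := l * p - 2 with hqdef
  have hqz : ((q : ℕ) : ℤ) = (l : ℤ) * p - 2 := by
    rw [hqdef, Nat.cast_sub h2lp]
    push_cast
    ring
  have hp : 0 < p := by omega
  have hq0 : 0 < q := by omega
  set e : ℕ → ℕ := em p with hedef
  set μ : ℕ → ℕ := μm p l with hμdef
  have helt : ∀ j, j < p → e j < p := by
    intro j hj; simp only [hedef, em]; split_ifs <;> omega
  have hinj : ∀ j, j < p → ∀ j', j' < p → e j = e j' → j = j' := by
    intro j hj j' hj' h; simp only [hedef, em] at h; split_ifs at h <;> omega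
  have hq : ∀ j, j < p → e j + p * μ j = j * q := by
    intro j hj
    simp only [hedef, hμdef, em, μm, hqdef]
    split_ifs with h1 h2
    · subst h1; simp
    · have ha : 2*j ≤ p := by omega
      have hb : 1 ≤ l*j := by
        calc 1 = 1*1 := by ring
        _ ≤ l*j := Nat.mul_le_mul hl (by omega)
      zify [ha, hb, h2lp]
      ring
    · have ha : p ≤ 2*j := by omega
      have hb : 2 ≤ l*j := by
        calc 2 = 1*2 := by ring
        _ ≤ l*j := Nat.mul_le_mul hl (by omega)
      have hc : 2*j ≤ 2*p := by omega
      zify [ha, hb, hc, h2lp]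
      ring
  have hE0 : ∀ j, j < p → e j = 0 → μ j = 0 := by
    intro j hj h
    simp only [hedef, em] at h
    simp only [hμdef, μm]
    split_ifs at h ⊢ <;> omega
  have hΔ' : (T (p:ℤ) - 1) * (T ((q:ℕ):ℤ) - 1) * Δ = (T ((p:ℤ)*((q:ℕ):ℤ)) - 1) * (T 1 - 1) := by
    rw [hqz]; exact hΔ
  have hmaster := master p q e μ hp hq0 helt hinj hq hE0 Δ hΔ'
  rw [hmaster]
  have hμ0 : μ 0 = 0 := by simp [hμdef, μm]
  have he0 : e 0 = 0 := by simp [hedef, em]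
  have hpz : (p:ℤ) = 2*(m:ℤ)+1 := by exact_mod_cast congrArg (Nat.cast : ℕ → ℤ) hpm
  -- count A
  have hA : ∀ j ∈ range p, ((range (μ j)).filter
      (fun k : ℕ => ((e j : ℤ) + (p:ℤ) * (k:ℤ) - 1) ∉ EE p e μ)).card
      = if p ≤ 2*j + 1 then l*m - 1 else 0 := by
    intro j hjr
    rw [mem_range] at hjr
    by_cases hj0 : j = 0
    · subst hj0
      rw [hμ0, if_neg (by omega)]
      simp
    · by_cases hcs : 2*j + 1 < p
      · -- j ∈ [1, m): filter empty
        rw [if_neg (by omega)]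
        rw [Finset.card_eq_zero, Finset.filter_eq_empty_iff]
        intro k hk
        rw [mem_range] at hk
        rw [not_not]
        have hσ : j + m + 1 < p := by omega
        have hej : e j = p - 2*j := by
          simp only [hedef, em]; rw [if_neg hj0, if_pos (by omega)]
        have heσ : e (j + m + 1) = p - 2*j - 1 := by
          simp only [hedef, em]; rw [if_neg (by omega), if_neg (by omega)]
          omega
        have hxy : (e j : ℤ) - 1 = (e (j+m+1) : ℤ) := by rw [hej, heσ]; omega
        have hrw : (e j : ℤ) + (p:ℤ)*(k:ℤ) - 1 = (e (j+m+1) : ℤ) + (p:ℤ)*(k:ℤ) := by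
          linarith
        rw [hrw, mem_EE helt hinj hσ k]
        have hμσ : μ (j+m+1) = l*(j+m+1) - 2 := by
          simp only [hμdef, μm]; rw [if_neg (by omega), if_neg (by omega)]
        have hμj : μ j = l*j - 1 := by
          simp only [hμdef, μm]; rw [if_neg hj0, if_pos (by omega)]
        rw [hμσ]
        have hsplit : l*(j+m+1) = l*j + l*(m+1) := by
          rw [show j+m+1 = j + (m+1) by ring, Nat.mul_add]
        have hlm1 : m+1 ≤ l*(m+1) := Nat.le_mul_of_pos_left (m+1) hl
        omega
      · rw [if_pos (by omega)]
        by_cases hjm : j = m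
        · -- e j = 1, predecessor is 0 = e 0
          have hej : e j = 1 := by
            simp only [hedef, em]; rw [if_neg hj0, if_pos (by omega)]
            omega
          have hμj : μ j = l*m - 1 := by
            simp only [hμdef, μm]; rw [if_neg hj0, if_pos (by omega), hjm]
          have hfc : ∀ k ∈ range (μ j),
              ((( e j : ℤ) + (p:ℤ)*(k:ℤ) - 1) ∉ EE p e μ) ↔ True := by
            intro k hk
            have hrw : (e j : ℤ) + (p:ℤ)*(k:ℤ) - 1 = (e 0 : ℤ) + (p:ℤ)*(k:ℤ) := by
              rw [hej, he0]; push_cast; ring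
            rw [hrw, mem_EE helt hinj hp k]
            simp [hμ0]
          rw [Finset.filter_congr hfc]
          simp [hμj]
        · -- j ≥ m+1 : 2j > p
          have hcase : p < 2*j := by omega
          have hσ : j - m < p := by omega
          have hej : e j = 2*p - 2*j := by
            simp only [hedef, em]; rw [if_neg hj0, if_neg (by omega)]
          have heσ : e (j - m) = 2*p - 2*j - 1 := by
            simp only [hedef, em]; rw [if_neg (by omega), if_pos (by omega)]
            omega
          have hxy : (e j : ℤ) - 1 = (e (j-m) : ℤ) := by rw [hej, heσ]; omega
          have hμσ : μ (j-m) = l*(j-m) - 1 := by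
            simp only [hμdef, μm]; rw [if_neg (by omega), if_pos (by omega)]
          have hμj : μ j = l*j - 2 := by
            simp only [hμdef, μm]; rw [if_neg hj0, if_neg (by omega)]
          have hfc : ∀ k ∈ range (μ j),
              ((( e j : ℤ) + (p:ℤ)*(k:ℤ) - 1) ∉ EE p e μ) ↔ (l*(j-m) - 1 ≤ k) := by
            intro k hk
            have hrw : (e j : ℤ) + (p:ℤ)*(k:ℤ) - 1 = (e (j-m) : ℤ) + (p:ℤ)*(k:ℤ) := by
              linarith
            rw [hrw, mem_EE helt hinj hσ k, hμσ, not_lt]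
          rw [Finset.filter_congr hfc, filter_ge_card, hμj]
          have hsplit : l*j = l*(j-m) + l*m := by
            conv_lhs => rw [show j = (j - m) + m by omega]
            rw [Nat.mul_add]
          have h1 : 1 ≤ l*(j-m) := by
            calc 1 = 1*1 := by ring
            _ ≤ l*(j-m) := Nat.mul_le_mul hl (by omega)
          have h2 : 1 ≤ l*m := by
            calc 1 = 1*1 := by ring
            _ ≤ l*m := Nat.mul_le_mul hl (by omega)
          omega
  -- count B
  have hB : ∀ j ∈ range p, ((range (μ j)).filter
      (fun k : ℕ => ((e j : ℤ) + (p:ℤ) * (k:ℤ) + 1) ∉ EE p e μ)).card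
      = (if p ≤ 2*j ∧ j ≠ m+1 then l*(m+1) - 1 else 0)
        + (if j = m+1 then l*(m+1) - 2 else 0) := by
    intro j hjr
    rw [mem_range] at hjr
    by_cases hj1 : j = m+1
    · rw [if_neg (by simp [hj1]), if_pos hj1]
      have hej : e j = p - 1 := by
        simp only [hedef, em]; rw [if_neg (by omega), if_neg (by omega)]
        omega
      have hμj : μ j = l*(m+1) - 2 := by
        simp only [hμdef, μm]; rw [if_neg (by omega), if_neg (by omega), hj1]
      have hfc : ∀ k ∈ range (μ j),
          ((( e j : ℤ) + (p:ℤ)*(k:ℤ) + 1) ∉ EE p e μ) ↔ True := by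
        intro k hk
        have hrw : (e j : ℤ) + (p:ℤ)*(k:ℤ) + 1 = (e 0 : ℤ) + (p:ℤ)*((k+1 : ℕ):ℤ) := by
          rw [hej, he0]
          push_cast [Nat.cast_sub (by omega : 1 ≤ p)]
          ring
        rw [hrw, mem_EE helt hinj hp (k+1)]
        simp [hμ0]
      rw [Finset.filter_congr hfc]
      simp [hμj]
    · rw [if_neg hj1, add_zero]
      by_cases hcase : 2*j < p
      · rw [if_neg (by omega)]
        by_cases hj0 : j = 0
        · subst hj0; rw [hμ0]; simp
        · rw [Finset.card_eq_zero, Finset.filter_eq_empty_iff]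
          intro k hk
          rw [mem_range] at hk
          rw [not_not]
          have hσ : j + m < p := by omega
          have hej : e j = p - 2*j := by
            simp only [hedef, em]; rw [if_neg hj0, if_pos hcase]
          have heσ : e (j + m) = p - 2*j + 1 := by
            simp only [hedef, em]; rw [if_neg (by omega), if_neg (by omega)]
            omega
          have hxy : (e j : ℤ) + 1 = (e (j+m) : ℤ) := by rw [hej, heσ]; omega
          have hrw : (e j : ℤ) + (p:ℤ)*(k:ℤ) + 1 = (e (j+m) : ℤ) + (p:ℤ)*(k:ℤ) := by
            linarith
          rw [hrw, mem_EE helt hinj hσ k]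
          have hμσ : μ (j+m) = l*(j+m) - 2 := by
            simp only [hμdef, μm]; rw [if_neg (by omega), if_neg (by omega)]
          have hμj : μ j = l*j - 1 := by
            simp only [hμdef, μm]; rw [if_neg hj0, if_pos hcase]
          rw [hμσ]
          have hsplit : l*(j+m) = l*j + l*m := by rw [Nat.mul_add]
          have hlm : m ≤ l*m := Nat.le_mul_of_pos_left m hl
          omega
      · -- j ≥ m+2
        rw [if_pos (by omega)]
        have hj0 : j ≠ 0 := by omega
        have hσpos : j - (m+1) ≠ 0 := by omega
        have hσ : j - (m+1) < p := by omega
        have hej : e j = 2*p - 2*j := by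
          simp only [hedef, em]; rw [if_neg hj0, if_neg (by omega)]
        have heσ : e (j - (m+1)) = 2*p - 2*j + 1 := by
          simp only [hedef, em]; rw [if_neg hσpos, if_pos (by omega)]
          omega
        have hxy : (e j : ℤ) + 1 = (e (j-(m+1)) : ℤ) := by rw [hej, heσ]; omega
        have hμσ : μ (j-(m+1)) = l*(j-(m+1)) - 1 := by
          simp only [hμdef, μm]; rw [if_neg hσpos, if_pos (by omega)]
        have hμj : μ j = l*j - 2 := by
          simp only [hμdef, μm]; rw [if_neg hj0, if_neg (by omega)]
        have hfc : ∀ k ∈ range (μ j),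
            ((( e j : ℤ) + (p:ℤ)*(k:ℤ) + 1) ∉ EE p e μ) ↔ (l*(j-(m+1)) - 1 ≤ k) := by
          intro k hk
          have hrw : (e j : ℤ) + (p:ℤ)*(k:ℤ) + 1 = (e (j-(m+1)) : ℤ) + (p:ℤ)*(k:ℤ) := by
            linarith
          rw [hrw, mem_EE helt hinj hσ k, hμσ, not_lt]
        rw [Finset.filter_congr hfc, filter_ge_card, hμj]
        have hsplit : l*j = l*(j-(m+1)) + l*(m+1) := by
          conv_lhs => rw [show j = (j - (m+1)) + (m+1) by omega]
          rw [Nat.mul_add]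
        have h1 : 1 ≤ l*(j-(m+1)) := by
          calc 1 = 1*1 := by ring
          _ ≤ l*(j-(m+1)) := Nat.mul_le_mul hl (by omega)
        have h2 : m+1 ≤ l*(m+1) := Nat.le_mul_of_pos_left (m+1) hl
        omega
  rw [Finset.sum_congr rfl hA, Finset.sum_congr rfl hB]
  have hSA : ∑ j ∈ range p, (if p ≤ 2*j + 1 then l*m - 1 else 0) = (m+1) * (l*m - 1) := by
    rw [Finset.sum_ite, Finset.sum_const, Finset.sum_const]
    have h : (range p).filter (fun j => p ≤ 2*j+1) = Finset.Ico m p := by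
      ext x
      simp only [Finset.mem_filter, Finset.mem_range, Finset.mem_Ico]
      omega
    rw [h, Nat.card_Ico]
    simp
    omega
  have hSB : ∑ j ∈ range p, ((if p ≤ 2*j ∧ j ≠ m+1 then l*(m+1) - 1 else 0)
        + (if j = m+1 then l*(m+1) - 2 else 0))
      = (m-1) * (l*(m+1) - 1) + (l*(m+1) - 2) := by
    rw [Finset.sum_add_distrib]
    congr 1
    · rw [Finset.sum_ite, Finset.sum_const, Finset.sum_const]
      have h : (range p).filter (fun j => p ≤ 2*j ∧ j ≠ m+1) = Finset.Ico (m+2) p := by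
        ext x
        simp only [Finset.mem_filter, Finset.mem_range, Finset.mem_Ico]
        omega
      rw [h, Nat.card_Ico]
      simp
      omega
    · rw [Finset.sum_ite_eq' (range p) (m+1) (fun _ => l*(m+1) - 2)]
      rw [if_pos (by rw [mem_range]; omega)]
  rw [hSA, hSB]
  have hdiv : ((p:ℤ) - 1)/2 = (m:ℤ) := by omega
  have c1 : 1 ≤ l*m := by
    calc 1 = 1*1 := by ring
    _ ≤ l*m := Nat.mul_le_mul hl (by omega)
  have c2 : 2 ≤ l*(m+1) := by
    calc 2 = 1*2 := by ring
    _ ≤ l*(m+1) := Nat.mul_le_mul hl (by omega)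
  rw [hdiv]
  push_cast [Nat.cast_sub c1, Nat.cast_sub c2, Nat.cast_sub (by omega : 1 ≤ l*(m+1)), Nat.cast_sub hm]
  rw [hpz]
  ring

end St16

/-- **Statement 16.** For odd `p ≥ 3` and `l ≥ 1`, the sum of the absolute
values of the coefficients of the Alexander polynomial
`Δ_{T(p,q)} = (t^{pq} − 1)(t − 1)/((t^p − 1)(t^q − 1)) ∈ ℤ[t, t⁻¹]` of the
`(p, q)` torus knot equals `((p − 1)/2)·((p + 1)l + 2) + 1` when `q = lp + 2`,
and `((p − 1)/2)·((p + 1)l − 2) − 1` when `q = lp − 2`.  (The polynomial `Δ` is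
characterized implicitly by the identity `(t^p − 1)(t^q − 1)·Δ = (t^{pq} − 1)(t − 1)`.) -/
theorem statement16 (p l : ℕ) (hp : 3 ≤ p) (hodd : Odd p) (hl : 1 ≤ l) :
    (∀ Δ : LaurentPolynomial ℤ,
      (T (p : ℤ) - 1) * (T ((l : ℤ) * p + 2) - 1) * Δ =
          (T ((p : ℤ) * ((l : ℤ) * p + 2)) - 1) * (T 1 - 1) →
      ∑ j ∈ (AddMonoidAlgebra.coeff Δ : ℤ →₀ ℤ).support, |(AddMonoidAlgebra.coeff Δ : ℤ →₀ ℤ) j| =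
        ((p : ℤ) - 1) / 2 * (((p : ℤ) + 1) * l + 2) + 1) ∧
    (∀ Δ : LaurentPolynomial ℤ,
      (T (p : ℤ) - 1) * (T ((l : ℤ) * p - 2) - 1) * Δ =
          (T ((p : ℤ) * ((l : ℤ) * p - 2)) - 1) * (T 1 - 1) →
      ∑ j ∈ (AddMonoidAlgebra.coeff Δ : ℤ →₀ ℤ).support, |(AddMonoidAlgebra.coeff Δ : ℤ →₀ ℤ) j| =
        ((p : ℤ) - 1) / 2 * (((p : ℤ) + 1) * l - 2) - 1) := by
  obtain ⟨m, hpm0⟩ := hodd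
  have hpm : p = 2*m + 1 := by omega
  have hm : 1 ≤ m := by omega
  exact ⟨fun Δ hΔ => St16.plus_case p l m hpm hm hl Δ hΔ,
         fun Δ hΔ => St16.minus_case p l m hpm hm hl Δ hΔ⟩
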